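/- arXiv:2409.04945 — 2 statements merged into one kernel-verified Lean document; each statement's English description precedes it below -/
import Mathlib

section
/- Let f : ℝ^K → ℝ and g : ℝ^K → ℝ be convex, with f differentiable, and let F = f + g. Let h(·, V) be differentiable convex majorizers of g: g(x) ≤ h(x, V) for all x, V with g(V) = h(V, V). Let P(V) be the minimizer of f(·) + h(·, V), so that ∇f(P(V)) + ∇_x h(P(V), V) = 0. Then for any x, F(x) − F(P(V)) ≥ h(x, x) − h(x, V). -/
lemma crit_min {E : Type*} [NormedAddCommGroup E] [NormedSpace ℝ E]
    (φ : E → ℝ) (hc : ConvexOn ℝ Set.univ φ) (P : E)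
    (hd : HasFDerivAt φ (0 : E →L[ℝ] ℝ) P) (x : E) : φ P ≤ φ x := by
  set v := x - P with hv
  set ψ : ℝ → ℝ := fun t => φ (P + t • v) with hψ
  have h1 : HasDerivAt (fun t : ℝ => P + t • v) v 0 := by
    simpa using ((hasDerivAt_id (0 : ℝ)).smul_const v).const_add P
  have hline : HasDerivAt ψ 0 0 := by
    have hd' : HasFDerivAt φ (0 : E →L[ℝ] ℝ) (P + (0:ℝ) • v) := by simpa using hd
    have h2 := hd'.comp_hasDerivAt 0 h1
    exact (by simpa using h2 : HasDerivAt (φ ∘ fun t : ℝ => P + t • v) (0 : ℝ) (0 : ℝ))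
  have htend := hasDerivAt_iff_tendsto_slope.1 hline
  have htend' : Filter.Tendsto (slope ψ 0) (nhdsWithin 0 (Set.Ioi 0)) (nhds 0) :=
    htend.mono_left (nhdsWithin_mono 0 (fun t ht => ne_of_gt ht))
  have hbound : ∀ᶠ t in nhdsWithin (0 : ℝ) (Set.Ioi 0), slope ψ 0 t ≤ φ x - φ P := by
    filter_upwards [Ioo_mem_nhdsGT_of_mem (by norm_num : (0 : ℝ) ∈ Set.Ico 0 1)] with t ht
    have ht0 : 0 < t := ht.1
    have ht1 : t < 1 := ht.2
    have hconv := hc.2 (Set.mem_univ P) (Set.mem_univ x)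
      (by linarith : (0 : ℝ) ≤ 1 - t) (le_of_lt ht0) (by ring)
    have heq : (1 - t) • P + t • x = P + t • v := by
      simp [hv, smul_sub, sub_smul]; abel
    have hψt : ψ t ≤ (1 - t) * φ P + t * φ x := by
      rw [hψ]; simpa [heq, smul_eq_mul] using hconv
    have hψ0 : ψ 0 = φ P := by simp [hψ]
    have : slope ψ 0 t = (ψ t - ψ 0) / t := by simp [slope_def_field]
    rw [this, div_le_iff₀ ht0]
    nlinarith [hψt, hψ0]
  have h0 : (0 : ℝ) ≤ φ x - φ P :=
    le_of_tendsto htend' hbound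
  linarith

/-- Key MM inequality (Lemma 1): if `h(·,V)` are differentiable convex majorizers of a
convex `g` tight at the anchor, `f` is convex differentiable, and `P V` is a stationary
point of `f + h(·,V)`, then `F(x) − F(P V) ≥ h(x,x) − h(x,V)` where `F = f + g`. -/
theorem stmt8 (K : ℕ)
    (f g : EuclideanSpace ℝ (Fin K) → ℝ)
    (h : EuclideanSpace ℝ (Fin K) → EuclideanSpace ℝ (Fin K) → ℝ)
    (hf_conv : ConvexOn ℝ Set.univ f) (hf_diff : Differentiable ℝ f)
    (hg_conv : ConvexOn ℝ Set.univ g)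
    (hh_conv : ∀ V, ConvexOn ℝ Set.univ fun x => h x V)
    (hh_diff : ∀ V, Differentiable ℝ fun x => h x V)
    (hmaj : ∀ x V, g x ≤ h x V) (htight : ∀ V, g V = h V V)
    (Pm : EuclideanSpace ℝ (Fin K) → EuclideanSpace ℝ (Fin K))
    (hstat : ∀ V, fderiv ℝ f (Pm V) + fderiv ℝ (fun x => h x V) (Pm V) = 0) :
    ∀ x V, (f x + g x) - (f (Pm V) + g (Pm V)) ≥ h x x - h x V := by
  intro x V
  set φ : EuclideanSpace ℝ (Fin K) → ℝ := fun y => f y + h y V with hφ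
  have hconv : ConvexOn ℝ Set.univ φ := hf_conv.add (hh_conv V)
  have hder : HasFDerivAt φ (0 : EuclideanSpace ℝ (Fin K) →L[ℝ] ℝ) (Pm V) := by
    have := (hf_diff (Pm V)).hasFDerivAt.add ((hh_diff V) (Pm V)).hasFDerivAt
    exact (by simpa [hstat V] using this : HasFDerivAt (f + fun x => h x V) (0 : EuclideanSpace ℝ (Fin K) →L[ℝ] ℝ) (Pm V))
  have hmin : φ (Pm V) ≤ φ x := crit_min φ hconv (Pm V) hder x
  have h1 : g (Pm V) ≤ h (Pm V) V := hmaj _ _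
  have h2 : g x = h x x := htight x
  simp only [hφ] at hmin
  linarith
end

section
/- Let F : ℝ^K → ℝ, and suppose a sequence x^0, x^1, ... satisfies for each i and all x: F(x) − F(x^{i+1}) ≥ −∑_k (|x_k| − |x^i_k|)²/(2|x^i_k|), and F(x^{i+1}) ≤ F(x^i). Then for any s ≥ 1 and any fixed x*, F(x^s) − F(x*) ≤ (1/(2s)) ∑_{i=0}^{s−1} ∑_k (|x*_k| − |x^i_k|)²/|x^i_k|. -/
open Finset in
/-- O(1/s) convergence rate (Theorem 1): summing the per-step MM inequality and using
monotonicity of `F` along the iterates. -/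
theorem stmt10 (K : ℕ) (F : (Fin K → ℝ) → ℝ) (x : ℕ → Fin K → ℝ)
    (h1 : ∀ i, ∀ z : Fin K → ℝ,
      F z - F (x (i + 1)) ≥ -∑ k, (|z k| - |x i k|) ^ 2 / (2 * |x i k|))
    (h2 : ∀ i, F (x (i + 1)) ≤ F (x i))
    (xstar : Fin K → ℝ) (s : ℕ) (hs : 1 ≤ s) :
    F (x s) - F xstar ≤
      (1 / (2 * s)) * ∑ i ∈ Finset.range s, ∑ k, (|xstar k| - |x i k|) ^ 2 / |x i k| := by
  have hmono : ∀ n m : ℕ, n ≤ m → F (x m) ≤ F (x n) := by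
    intro n m h
    induction m with
    | zero => simp_all
    | succ m ih =>
      rcases Nat.lt_or_ge n (m+1) with h' | h'
      · exact le_trans (h2 m) (ih (Nat.lt_succ_iff.mp h'))
      · have : n = m + 1 := le_antisymm h h'
        simp [this]
  have key : ∀ i ∈ Finset.range s,
      F (x s) - F xstar ≤ (1/2) * ∑ k, (|xstar k| - |x i k|) ^ 2 / |x i k| := by
    intro i hi
    have h' := h1 i xstar
    have hm := hmono (i+1) s (Finset.mem_range.mp hi)
    have heq : ∑ k, (|xstar k| - |x i k|) ^ 2 / (2 * |x i k|)
        = (1/2) * ∑ k, (|xstar k| - |x i k|) ^ 2 / |x i k| := by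
      rw [Finset.mul_sum]
      congr 1; ext k; ring
    linarith [h', heq.symm ▸ h']
  have hsum := Finset.sum_le_sum key
  rw [Finset.sum_const, Finset.card_range, ← Finset.mul_sum, nsmul_eq_mul] at hsum
  have hspos : (0:ℝ) < s := by exact_mod_cast hs
  rw [div_mul_eq_mul_div, one_mul, le_div_iff₀ (by positivity)]
  nlinarith [hsum]
end
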